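/- arXiv:2002.11199 — 3 statements merged into one kernel-verified Lean document; each statement's English description precedes it below -/
import Mathlib

section
/- If a compact metric dynamical system (X,f) has unique shadowing, then it has unique h-shadowing. -/
open Filter Topology Function

variable {X : Type*} [MetricSpace X]

/-- A (forward) `δ`-pseudo-orbit. -/
def PseudoOrbit (f : X → X) (δ : ℝ) (x : ℕ → X) : Prop :=
  ∀ i, dist (f (x i)) (x (i + 1)) < δ

/-- The orbit of `z` `ε`-shadows the sequence `x`. -/
def ShadowsFrom (f : X → X) (ε : ℝ) (z : X) (x : ℕ → X) : Prop :=
  ∀ i, dist (f^[i] z) (x i) < ε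

/-- Classical shadowing. -/
def HasShadowing (f : X → X) : Prop :=
  ∀ ε > 0, ∃ δ > 0, ∀ x : ℕ → X, PseudoOrbit f δ x → ∃ z, ShadowsFrom f ε z x

/-- A full (two-sided) orbit. -/
def FullOrbit (f : X → X) (z : ℤ → X) : Prop := ∀ i : ℤ, f (z i) = z (i + 1)

/-- A two-sided `δ`-pseudo-orbit. -/
def TwoSidedPseudoOrbit (f : X → X) (δ : ℝ) (x : ℤ → X) : Prop :=
  ∀ i : ℤ, dist (f (x i)) (x (i + 1)) < δ

/-- Two-sided shadowing. -/
def HasTwoSidedShadowing (f : X → X) : Prop :=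
  ∀ ε > 0, ∃ δ > 0, ∀ x : ℤ → X, TwoSidedPseudoOrbit f δ x →
    ∃ z : ℤ → X, FullOrbit f z ∧ ∀ i, dist (z i) (x i) < ε

/-- A backwards `δ`-pseudo-orbit (indexed by nonpositive integers). -/
def BackwardPseudoOrbit (f : X → X) (δ : ℝ) (x : ℤ → X) : Prop :=
  ∀ i < (0 : ℤ), dist (f (x i)) (x (i + 1)) < δ

/-- A backwards orbit. -/
def BackwardOrbit (f : X → X) (z : ℤ → X) : Prop := ∀ i < (0 : ℤ), f (z i) = z (i + 1)

/-- Backwards shadowing. -/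
def HasBackwardShadowing (f : X → X) : Prop :=
  ∀ ε > 0, ∃ δ > 0, ∀ x : ℤ → X, BackwardPseudoOrbit f δ x →
    ∃ z : ℤ → X, BackwardOrbit f z ∧ ∀ i ≤ (0 : ℤ), dist (z i) (x i) < ε

/-- An asymptotic pseudo-orbit. -/
def AsymptoticPseudoOrbit (f : X → X) (x : ℕ → X) : Prop :=
  Tendsto (fun i => dist (f (x i)) (x (i + 1))) atTop (nhds 0)

/-- s-limit shadowing. -/
def HasSLimitShadowing (f : X → X) : Prop :=
  HasShadowing f ∧ ∀ ε > 0, ∃ δ > 0, ∀ x : ℕ → X,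
    PseudoOrbit f δ x → AsymptoticPseudoOrbit f x →
    ∃ z, ShadowsFrom f ε z x ∧ Tendsto (fun i => dist (f^[i] z) (x i)) atTop (nhds 0)

/-- Two-sided asymptotic pseudo-orbit condition. -/
def TwoSidedAsymptotic (f : X → X) (x : ℤ → X) : Prop :=
  Tendsto (fun i => dist (f (x i)) (x (i + 1))) atTop (nhds 0) ∧
  Tendsto (fun i => dist (f (x i)) (x (i + 1))) atBot (nhds 0)

/-- The L-shadowing condition: two-sided asymptotic pseudo-orbits are
asymptotically shadowed by full orbits. -/
def HasLShadowing (f : X → X) : Prop :=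
  ∀ ε > 0, ∃ δ > 0, ∀ x : ℤ → X,
    TwoSidedPseudoOrbit f δ x → TwoSidedAsymptotic f x →
    ∃ z : ℤ → X, FullOrbit f z ∧ (∀ i, dist (z i) (x i) < ε) ∧
      Tendsto (fun i => dist (z i) (x i)) atTop (nhds 0) ∧
      Tendsto (fun i => dist (z i) (x i)) atBot (nhds 0)

/-- Two-sided s-limit shadowing. -/
def HasTwoSidedSLimitShadowing (f : X → X) : Prop :=
  HasTwoSidedShadowing f ∧ HasLShadowing f

/-- Backwards asymptotic pseudo-orbit condition. -/
def BackwardAsymptotic (f : X → X) (x : ℤ → X) : Prop :=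
  Tendsto (fun i => dist (f (x i)) (x (i + 1))) atBot (nhds 0)

/-- Backwards s-limit shadowing. -/
def HasBackwardSLimitShadowing (f : X → X) : Prop :=
  HasBackwardShadowing f ∧ ∀ ε > 0, ∃ δ > 0, ∀ x : ℤ → X,
    BackwardPseudoOrbit f δ x → BackwardAsymptotic f x →
    ∃ z : ℤ → X, BackwardOrbit f z ∧ (∀ i ≤ (0 : ℤ), dist (z i) (x i) < ε) ∧
      Tendsto (fun i => dist (z i) (x i)) atBot (nhds 0)

/-- A set has at most `n` points. -/
def AtMostCard (S : Set X) (n : ℕ) : Prop := ∃ F : Finset X, F.card ≤ n ∧ S ⊆ ↑F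

/-- Positively `n`-expansive. -/
def PosNExpansive (f : X → X) (n : ℕ) : Prop :=
  ∃ r > 0, ∀ x : X, AtMostCard {y | ∀ k : ℕ, dist (f^[k] x) (f^[k] y) < r} n

/-- `n`-expansive (two-sided). -/
def NExpansive (f : X → X) (n : ℕ) : Prop :=
  ∃ r > 0, ∀ x : ℤ → X, FullOrbit f x →
    AtMostCard {y0 | ∃ y : ℤ → X, FullOrbit f y ∧ y 0 = y0 ∧ ∀ i, dist (x i) (y i) < r} n

/-- `n`-shadowing. -/
def HasNShadowing (f : X → X) (n : ℕ) : Prop :=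
  ∃ η > 0, ∀ ε, 0 < ε → ε < η → ∃ δ > 0, ∀ x : ℕ → X, PseudoOrbit f δ x →
    (∃ z, ShadowsFrom f ε z x) ∧ AtMostCard {z | ShadowsFrom f ε z x} n

/-- Two-sided `n`-shadowing. -/
def HasTwoSidedNShadowing (f : X → X) (n : ℕ) : Prop :=
  ∃ η > 0, ∀ ε, 0 < ε → ε < η → ∃ δ > 0, ∀ x : ℤ → X, TwoSidedPseudoOrbit f δ x →
    (∃ z : ℤ → X, FullOrbit f z ∧ ∀ i, dist (z i) (x i) < ε) ∧
    AtMostCard {z0 | ∃ z : ℤ → X, FullOrbit f z ∧ z 0 = z0 ∧ ∀ i, dist (z i) (x i) < ε} n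

/-- h-shadowing. -/
def HasHShadowing (f : X → X) : Prop :=
  ∀ ε > 0, ∃ δ > 0, ∀ (m : ℕ) (x : ℕ → X),
    (∀ i < m, dist (f (x i)) (x (i + 1)) < δ) →
    ∃ z, (∀ i ≤ m, dist (f^[i] z) (x i) < ε) ∧ f^[m] z = x m

/-- Unique shadowing (`1`-shadowing). -/
def HasUniqueShadowing (f : X → X) : Prop :=
  ∃ η > 0, ∀ ε, 0 < ε → ε < η → ∃ δ > 0, ∀ x : ℕ → X, PseudoOrbit f δ x →
    ∃! z, ShadowsFrom f ε z x

/-- Unique s-limit shadowing. -/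
def HasUniqueSLimitShadowing (f : X → X) : Prop :=
  HasUniqueShadowing f ∧ ∃ η > 0, ∀ ε, 0 < ε → ε < η → ∃ δ > 0, ∀ x : ℕ → X,
    PseudoOrbit f δ x → AsymptoticPseudoOrbit f x →
    ∃! z, ShadowsFrom f ε z x ∧ Tendsto (fun i => dist (f^[i] z) (x i)) atTop (nhds 0)

/-- Unique h-shadowing. -/
def HasUniqueHShadowing (f : X → X) : Prop :=
  ∃ η > 0, ∀ ε, 0 < ε → ε < η → ∃ δ > 0, ∀ (m : ℕ) (x : ℕ → X),
    (∀ i < m, dist (f (x i)) (x (i + 1)) < δ) →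
    ∃! z, (∀ i ≤ m, dist (f^[i] z) (x i) < ε) ∧ f^[m] z = x m

/-- Limit shadowing. -/
def HasLimitShadowing (f : X → X) : Prop :=
  ∀ x : ℕ → X, AsymptoticPseudoOrbit f x →
    ∃ z, Tendsto (fun i => dist (f^[i] z) (x i)) atTop (nhds 0)

/-- Unique limit shadowing. -/
def HasUniqueLimitShadowing (f : X → X) : Prop :=
  ∀ x : ℕ → X, AsymptoticPseudoOrbit f x →
    ∃! z, Tendsto (fun i => dist (f^[i] z) (x i)) atTop (nhds 0)

/-- c-expansivity. -/
def CExpansive (f : X → X) : Prop :=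
  ∃ η > 0, ∀ x y : ℤ → X, FullOrbit f x → FullOrbit f y →
    (∀ i, dist (x i) (y i) < η) → x 0 = y 0

/-- Positive expansivity. -/
def PosExpansive (f : X → X) : Prop :=
  ∃ r > 0, ∀ x : X, {y | ∀ k : ℕ, dist (f^[k] x) (f^[k] y) < r} = {x}

/-- Topological mixing. -/
def Mixing (f : X → X) : Prop :=
  ∀ U V : Set X, IsOpen U → IsOpen V → U.Nonempty → V.Nonempty →
    ∃ N, ∀ n ≥ N, (f^[n] '' U ∩ V).Nonempty


theorem uniqueShadowing_implies_uniqueHShadowing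
    {X : Type*} [MetricSpace X] [CompactSpace X] (f : X → X) (hf : Continuous f)
    (h : HasUniqueShadowing f) : HasUniqueHShadowing f := by
  obtain ⟨η, hη, H⟩ := h
  refine ⟨η, hη, fun ε hε hεη => ?_⟩
  obtain ⟨δ, hδ, Hδ⟩ := H ε hε hεη
  refine ⟨δ, hδ, fun m x hx => ?_⟩
  set x' : ℕ → X := fun i => if i ≤ m then x i else f^[i - m] (x m) with hx'def
  have hx'pseudo : PseudoOrbit f δ x' := by
    intro i
    by_cases hi : i + 1 ≤ m
    · simp only [x', if_pos (Nat.le_of_succ_le hi), if_pos hi]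
      exact hx i (Nat.lt_of_succ_le hi)
    · by_cases hi' : i ≤ m
      · have him : i = m := by omega
        subst him
        simp only [x', if_pos le_rfl, if_neg hi]
        have h1 : i + 1 - i = 1 := by omega
        rw [h1, Function.iterate_one]
        simpa using hδ
      · simp only [x', if_neg hi', if_neg hi]
        have h1 : i + 1 - m = (i - m) + 1 := by omega
        rw [h1, Function.iterate_succ_apply']
        simpa using hδ
  obtain ⟨z, hz, hzuniq⟩ := Hδ x' hx'pseudo
  have key : f^[m] z = x m := by
    have hw : PseudoOrbit f δ (fun i => f^[i] (x m)) := by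
      intro i
      simpa [Function.iterate_succ_apply'] using hδ
    obtain ⟨w, _, hwuniq⟩ := Hδ _ hw
    have h1 : ShadowsFrom f ε (f^[m] z) (fun i => f^[i] (x m)) := by
      intro i
      rw [← Function.iterate_add_apply]
      have hzi := hz (i + m)
      rcases Nat.eq_zero_or_pos i with hi0 | hipos
      · subst hi0
        simpa [x'] using hzi
      · have : x' (i + m) = f^[i] (x m) := by
          simp only [x', if_neg (by omega : ¬ i + m ≤ m)]
          congr 1
          omega
        rwa [this] at hzi
    have h2 : ShadowsFrom f ε (x m) (fun i => f^[i] (x m)) := by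
      intro i; simpa using hε
    rw [hwuniq _ h1, hwuniq _ h2]
  refine ⟨z, ⟨fun i hi => ?_, key⟩, fun z' hz' => ?_⟩
  · have := hz i
    simpa [x', if_pos hi] using this
  · obtain ⟨hz'1, hz'2⟩ := hz'
    apply hzuniq
    intro i
    by_cases hi : i ≤ m
    · simpa [x', if_pos hi] using hz'1 i hi
    · have : f^[i] z' = x' i := by
        simp only [x', if_neg hi]
        have h2 := Function.iterate_add_apply f (i - m) m z'
        rw [hz'2] at h2
        rw [show i - m + m = i by omega] at h2
        exact h2
      rw [this]
      simpa using hε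
end

section
/- The identity map on X = {1/2^n : n≥0} ∪ {0} ⊂ ℝ has unique h-shadowing but not unique shadowing. -/
open Filter Topology Function

variable {X : Type*} [MetricSpace X]

noncomputable abbrev IdExampleSpace : Type :=
  ↥(({0} : Set ℝ) ∪ {x : ℝ | ∃ n : ℕ, x = (1/2) ^ n})

lemma idex_nonneg (a : IdExampleSpace) : 0 ≤ a.val := by
  rcases a.property with h | ⟨n, hn⟩
  · simp [Set.mem_singleton_iff.mp h]
  · rw [hn]; positivity

lemma idex_isolated {δ : ℝ} (a b : IdExampleSpace) (h : dist a b < δ)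
    (h2 : 2 * δ ≤ a.val) : b = a := by
  have hd := h
  rw [Subtype.dist_eq, Real.dist_eq] at hd
  have hδpos : 0 < δ := lt_of_le_of_lt (abs_nonneg _) hd
  have hapos : 0 < a.val := lt_of_lt_of_le (by linarith) h2
  rcases a.property with ha | ⟨n, hn⟩
  · exact absurd (Set.mem_singleton_iff.mp ha) (by linarith)
  · rcases b.property with hb | ⟨k, hk⟩
    · exfalso
      rw [Set.mem_singleton_iff.mp hb] at hd
      rw [abs_of_nonneg (by linarith : (0:ℝ) ≤ a.val - 0)] at hd
      linarith
    · have hhalf : a.val / 2 = (1/2 : ℝ) ^ (n + 1) := by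
        rw [hn, pow_succ]; ring
      rcases lt_trichotomy k n with hkn | hkn | hkn
      · exfalso
        obtain ⟨p, rfl⟩ : ∃ p, n = p + 1 := ⟨n - 1, by omega⟩
        have : a.val * 2 ≤ b.val := by
          rw [hn, hk, pow_succ]
          have : (1/2 : ℝ) ^ p ≤ (1/2) ^ k := by
            apply pow_le_pow_of_le_one (by norm_num) (by norm_num) (by omega)
          linarith
        have : b.val - a.val ≥ a.val := by linarith
        have := le_abs_self (b.val - a.val)
        rw [abs_sub_comm] at hd
        linarith
      · apply Subtype.ext; rw [hn, hk, hkn]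
      · exfalso
        have : b.val ≤ a.val / 2 := by
          rw [hk, hhalf]
          apply pow_le_pow_of_le_one (by norm_num) (by norm_num) (by omega)
        have := le_abs_self (a.val - b.val)
        linarith

/-- The "linking" relation: equal, or both small. -/
lemma idex_step {δ : ℝ} (a b : IdExampleSpace) (h : dist a b < δ) :
    a = b ∨ (a.val < 2 * δ ∧ b.val < 2 * δ) := by
  by_cases ha : a.val < 2 * δ
  · by_cases hb : b.val < 2 * δ
    · exact Or.inr ⟨ha, hb⟩
    · left
      exact idex_isolated b a (by rwa [dist_comm]) (le_of_not_gt hb)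
  · left
    exact (idex_isolated a b h (le_of_not_gt ha)).symm

theorem id_uniqueHShadowing_not_uniqueShadowing :
    HasUniqueHShadowing (id : IdExampleSpace → IdExampleSpace) ∧
    ¬ HasUniqueShadowing (id : IdExampleSpace → IdExampleSpace) := by
  constructor
  · refine ⟨1, one_pos, fun ε hε _ => ⟨ε / 2, by linarith, fun m x hpo => ?_⟩⟩
    simp only [Function.iterate_id, id_eq] at *
    -- key: for all i ≤ j ≤ m, x i = x j or both < ε
    have key : ∀ j ≤ m, ∀ i ≤ j, x i = x j ∨ (x i).val < ε ∧ (x j).val < ε := by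
      intro j hj
      induction j with
      | zero => intro i hi; interval_cases i; left; rfl
      | succ j ih =>
        intro i hi
        rcases Nat.lt_succ_iff_lt_or_eq.mp (Nat.lt_succ_of_le hi) with hi' | hi'
        · have h1 := ih (by omega) i (by omega)
          have h2 := idex_step (x j) (x (j+1)) (hpo j (by omega))
          have h2' : x j = x (j+1) ∨ (x j).val < ε ∧ (x (j+1)).val < ε := by
            rcases h2 with h2 | h2
            · exact Or.inl h2
            · right; constructor <;> linarith [h2.1, h2.2]
          rcases h1 with h1 | h1 <;> rcases h2' with h2' | h2'
          · left; rw [h1, h2']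
          · right; rw [h1]; exact h2'
          · right; exact ⟨h1.1, h2' ▸ h1.2⟩
          · right; exact ⟨h1.1, h2'.2⟩
        · subst hi'; left; rfl
    have hdist : ∀ i ≤ m, dist (x m) (x i) < ε := by
      intro i hi
      rcases key m le_rfl i hi with h | h
      · rw [h]; simpa using hε
      · rw [Subtype.dist_eq, Real.dist_eq, abs_sub_lt_iff]
        have := idex_nonneg (x i); have := idex_nonneg (x m)
        constructor <;> linarith [h.1, h.2]
    refine ⟨x m, ⟨hdist, rfl⟩, fun z hz => hz.2⟩
  · rintro ⟨η, hη, h⟩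
    set ε := min η 1 / 2 with hεdef
    have hε : 0 < ε := by positivity
    have hεη : ε < η := by
      have := min_le_left η 1
      rw [hεdef]; linarith
    obtain ⟨δ, hδ, hsh⟩ := h ε hε hεη
    obtain ⟨n, hn⟩ := exists_pow_lt_of_lt_one hε (by norm_num : (1/2 : ℝ) < 1)
    set z0 : IdExampleSpace := ⟨0, Or.inl rfl⟩ with hz0
    set z1 : IdExampleSpace := ⟨(1/2)^n, Or.inr ⟨n, rfl⟩⟩ with hz1
    obtain ⟨w, hw, huniq⟩ := hsh (fun _ => z0) (fun i => by simpa using hδ)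
    have h0 : z0 = w := huniq z0 (fun i => by
      simp only [Function.iterate_id, id_eq, dist_self]; exact hε)
    have h1 : z1 = w := huniq z1 (fun i => by
      simp only [Function.iterate_id, id_eq, Subtype.dist_eq, Real.dist_eq]
      show |(1/2:ℝ)^n - 0| < ε
      rw [sub_zero, abs_of_nonneg (by positivity)]
      exact hn)
    rw [← h0] at h1
    have : (0 : ℝ) = (1/2)^n := (congrArg Subtype.val h1).symm
    have : (0:ℝ) < (1/2)^n := by positivity
    linarith
end

section
/- Let (X,f) be a dynamical system on a compact metric space where f is injective, mixing, and has two-sided shadowing, and X contains more than one point. Then f is not positively n-expansive for any n∈ℕ. -/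
open Filter Topology Function

variable {X : Type*} [MetricSpace X]

private lemma fullOrbit_iter {X : Type*} [MetricSpace X] {f : X → X} {z : ℤ → X}
    (hz : FullOrbit f z) : ∀ k : ℕ, f^[k] (z 0) = z k := by
  intro k
  induction k with
  | zero => simp
  | succ k ih =>
    rw [Function.iterate_succ_apply', ih, hz k]
    norm_cast

private lemma fullOrbit_back {X : Type*} [MetricSpace X] {f : X → X}
    (hinj : Function.Injective f) {z z' : ℤ → X}
    (hz : FullOrbit f z) (hz' : FullOrbit f z') (h0 : z 0 = z' 0) :
    ∀ m : ℕ, z (-(m : ℤ)) = z' (-(m : ℤ)) := by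
  intro m
  induction m with
  | zero => simpa using h0
  | succ m ih =>
    apply hinj
    have e1 := hz (-((m : ℤ) + 1))
    have e2 := hz' (-((m : ℤ) + 1))
    have ha : (-((m : ℤ) + 1) + 1) = -(m : ℤ) := by ring
    rw [ha] at e1 e2
    have hc : (-(((m : ℕ) + 1 : ℕ) : ℤ)) = -((m : ℤ) + 1) := by push_cast; ring
    rw [hc, e1, e2, ih]

theorem mixing_injective_twoSidedShadowing_not_posNExpansive
    {X : Type*} [MetricSpace X] [CompactSpace X] (f : X → X) (hf : Continuous f)
    (hinj : Function.Injective f) (hmix : Mixing f)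
    (hts : HasTwoSidedShadowing f) (hX : ∃ x y : X, x ≠ y) :
    ∀ n : ℕ, 1 ≤ n → ¬ PosNExpansive f n := by
  classical
  rintro n - ⟨r, hr, hexp⟩
  obtain ⟨p, q, hpq⟩ := hX
  have hd : 0 < dist p q := dist_pos.2 hpq
  set d := dist p q with hdd
  set ε := min r d / 3 with hεdef
  have hεpos : 0 < ε := by
    rw [hεdef]; exact div_pos (lt_min hr hd) (by norm_num)
  have hεr : ε < r := by
    rw [hεdef]
    have : min r d ≤ r := min_le_left _ _
    linarith
  have hεd : 2 * ε < d := by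
    rw [hεdef]
    have : min r d ≤ d := min_le_right _ _
    linarith
  obtain ⟨δ, hδpos, hδ⟩ := hts ε hεpos
  obtain ⟨δ₁, hδ₁pos, hδ₁⟩ := Metric.uniformContinuous_iff.1
    (CompactSpace.uniformContinuous_of_continuous hf) (δ / 2) (by positivity)
  set δ₂ := min δ₁ (δ / 2) with hδ₂def
  have hδ₂pos : 0 < δ₂ := lt_min hδ₁pos (by positivity)
  have hδ₂₁ : δ₂ ≤ δ₁ := min_le_left _ _
  have hδ₂δ : δ₂ ≤ δ / 2 := min_le_right _ _
  set pt : Bool → X := fun b => if b then q else p with hptdef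
  have hmix' : ∀ a b : Bool, ∃ N, ∀ m ≥ N, ∃ u, dist u (pt a) < δ₂ ∧ dist (f^[m] u) (pt b) < δ₂ := by
    intro a b
    obtain ⟨N, hN⟩ := hmix (Metric.ball (pt a) δ₂) (Metric.ball (pt b) δ₂)
      Metric.isOpen_ball Metric.isOpen_ball
      ⟨_, Metric.mem_ball_self hδ₂pos⟩ ⟨_, Metric.mem_ball_self hδ₂pos⟩
    refine ⟨N, fun m hm => ?_⟩
    obtain ⟨v, ⟨w, hw1, rfl⟩, hv2⟩ := hN m hm
    exact ⟨w, Metric.mem_ball.1 hw1, Metric.mem_ball.1 hv2⟩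
  choose N hN using hmix'
  set L : ℕ := N false false + N false true + N true false + N true true + 1 with hLdef
  have hL1 : 1 ≤ L := by omega
  have hLpos : (0 : ℤ) < (L : ℤ) := by exact_mod_cast hL1
  have hU : ∀ a b : Bool, ∃ u, dist u (pt a) < δ₂ ∧ dist (f^[L] u) (pt b) < δ₂ := by
    intro a b
    refine hN a b L ?_
    cases a <;> cases b <;> omega
  choose u hu1 hu2 using hU
  clear_value L
  set c : Bool → Bool → ℕ → X :=
    fun a b m => if m = 0 then pt a else if m < L then f^[m] (u a b) else pt b with hcdef
  have hc0 : ∀ a b, c a b 0 = pt a := by intro a b; simp [hcdef]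
  have hcL : ∀ a b, c a b L = pt b := by
    intro a b
    show (if L = 0 then pt a else if L < L then f^[L] (u a b) else pt b) = pt b
    rw [if_neg (by omega : ¬ L = 0), if_neg (by omega : ¬ L < L)]
  have hchain : ∀ a b : Bool, ∀ m, m < L → dist (f (c a b m)) (c a b (m + 1)) < δ := by
    intro a b m hm
    have hfa : dist (f (pt a)) (f (u a b)) < δ / 2 :=
      hδ₁ (by rw [dist_comm]; exact lt_of_lt_of_le (hu1 a b) hδ₂₁)
    by_cases h0 : m = 0
    · subst h0
      by_cases h1 : 1 < L
      · have e1 : c a b 1 = f^[1] (u a b) := by simp [hcdef, h1]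
        rw [hc0, e1]
        simp only [Function.iterate_one]
        linarith
      · have hL1' : L = 1 := by omega
        have e1 : c a b 1 = pt b := by simp [hcdef, hL1']
        rw [hc0, e1]
        have h2 : dist (f (u a b)) (pt b) < δ₂ := by
          have := hu2 a b
          rwa [hL1', Function.iterate_one] at this
        calc dist (f (pt a)) (pt b) ≤ dist (f (pt a)) (f (u a b)) + dist (f (u a b)) (pt b) :=
              dist_triangle _ _ _
          _ < δ / 2 + δ₂ := by linarith
          _ ≤ δ := by linarith
    · have em : c a b m = f^[m] (u a b) := by simp [hcdef, h0, hm]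
      by_cases h2 : m + 1 < L
      · have e1 : c a b (m + 1) = f^[m + 1] (u a b) := by simp [hcdef, h2]
        rw [em, e1, Function.iterate_succ_apply']
        simpa using hδpos
      · have h3 : m + 1 = L := by omega
        have e1 : c a b (m + 1) = pt b := by rw [h3]; exact hcL a b
        have ee : f (f^[m] (u a b)) = f^[L] (u a b) := by
          rw [← h3]; exact (Function.iterate_succ_apply' f m _).symm
        rw [em, e1, ee]
        exact lt_of_lt_of_le (hu2 a b) (by linarith)
  set s : ℕ → ℤ → Bool := fun j k => decide (k = -((j : ℤ) + 1)) with hsdef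
  set xs : ℕ → ℤ → X := fun j i =>
    if 0 ≤ i then f^[i.toNat] p
    else c (s j (i / (L : ℤ))) (s j (i / (L : ℤ) + 1)) (i % (L : ℤ)).toNat with hxsdef
  have hpos : ∀ j : ℕ, ∀ k : ℕ, xs j (k : ℤ) = f^[k] p := by
    intro j k
    simp [hxsdef]
  have hneg : ∀ j : ℕ, ∀ k : ℤ, k < 0 → ∀ m : ℕ, m < L →
      xs j ((L : ℤ) * k + (m : ℤ)) = c (s j k) (s j (k + 1)) m := by
    intro j k hk m hm
    have hm' : (m : ℤ) < (L : ℤ) := by exact_mod_cast hm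
    have hnn : ¬ (0 ≤ (L : ℤ) * k + (m : ℤ)) := by
      have h1 : (L : ℤ) * k ≤ (L : ℤ) * (-1) := by
        apply mul_le_mul_of_nonneg_left (by omega) (by omega)
      push_neg
      omega
    have hdiv : ((L : ℤ) * k + (m : ℤ)) / (L : ℤ) = k := by
      rw [add_comm, Int.add_mul_ediv_left _ _ (by omega : (L : ℤ) ≠ 0),
        Int.ediv_eq_zero_of_lt (by positivity) hm', zero_add]
    have hmod : ((L : ℤ) * k + (m : ℤ)) % (L : ℤ) = (m : ℤ) := by
      rw [add_comm, Int.add_mul_emod_self_left,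
        Int.emod_eq_of_lt (by positivity) hm']
    simp only [hxsdef, hnn, if_false, hdiv, hmod, Int.toNat_natCast]
  have hpo : ∀ j, TwoSidedPseudoOrbit f δ (xs j) := by
    intro j i
    by_cases hi : 0 ≤ i
    · have e1 : xs j i = f^[i.toNat] p := by simp [hxsdef, hi]
      have e2 : xs j (i + 1) = f^[(i + 1).toNat] p := by simp [hxsdef, (by omega : 0 ≤ i + 1)]
      have e3 : (i + 1).toNat = i.toNat + 1 := by omega
      rw [e1, e2, e3, Function.iterate_succ_apply']
      simpa using hδpos
    · push_neg at hi
      set k : ℤ := i / (L : ℤ) with hkdef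
      have hmnn : 0 ≤ i % (L : ℤ) := Int.emod_nonneg i (by omega)
      have hmlt : i % (L : ℤ) < (L : ℤ) := Int.emod_lt_of_pos i hLpos
      set m : ℕ := (i % (L : ℤ)).toNat with hmdef
      have hmc : (m : ℤ) = i % (L : ℤ) := Int.toNat_of_nonneg hmnn
      have hdecomp : i = (L : ℤ) * k + (m : ℤ) := by
        rw [hmc, hkdef]; exact (Int.mul_ediv_add_emod i (L : ℤ)).symm
      have hmL : m < L := by omega
      have hkneg : k < 0 := by
        by_contra hge
        push_neg at hge
        have : (0 : ℤ) ≤ (L : ℤ) * k := mul_nonneg (by omega) hge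
        omega
      have exi : xs j i = c (s j k) (s j (k + 1)) m := by
        rw [hdecomp]; exact hneg j k hkneg m hmL
      by_cases hm1 : m + 1 < L
      · have e2 : xs j (i + 1) = c (s j k) (s j (k + 1)) (m + 1) := by
          have : i + 1 = (L : ℤ) * k + ((m + 1 : ℕ) : ℤ) := by
            rw [hdecomp]; push_cast; ring
          rw [this]; exact hneg j k hkneg (m + 1) hm1
        rw [exi, e2]
        exact hchain _ _ m hmL
      · have hm1' : m + 1 = L := by omega
        have e2 : xs j (i + 1) = pt (s j (k + 1)) := by
          by_cases hk1 : k + 1 < 0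
          · have hmc2 : (m : ℤ) + 1 = (L : ℤ) := by exact_mod_cast hm1'
            have : i + 1 = (L : ℤ) * (k + 1) + ((0 : ℕ) : ℤ) := by
              rw [hdecomp]; push_cast; linear_combination hmc2
            rw [this, hneg j (k + 1) hk1 0 (by omega), hc0]
          · have hk0 : k = -1 := by omega
            have hmc2 : (m : ℤ) + 1 = (L : ℤ) := by exact_mod_cast hm1'
            have hi1 : i + 1 = 0 := by
              rw [hdecomp, hk0]; push_cast; linarith
            have hs0 : s j (k + 1) = false := by
              simp only [hsdef, hk0]
              norm_num
              omega
            rw [hi1, hs0]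
            have : xs j 0 = f^[(0 : ℕ)] p := hpos j 0
            simpa [hptdef] using this
        have e2' : xs j (i + 1) = c (s j k) (s j (k + 1)) (m + 1) := by
          rw [e2, hm1', hcL]
        rw [exi, e2']
        exact hchain _ _ m hmL
  choose z hzorb hzcl using fun j : ℕ => hδ (xs j) (hpo j)
  obtain ⟨F, hFc, hFsub⟩ := hexp p
  have hmem : ∀ j : ℕ, z j 0 ∈ F := by
    intro j
    apply hFsub
    intro k
    have hit : f^[k] (z j 0) = z j (k : ℤ) := fullOrbit_iter (hzorb j) k
    have hcl := hzcl j (k : ℤ)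
    rw [hpos j k] at hcl
    rw [hit, dist_comm]
    linarith
  have hdistinct : ∀ j j' : ℕ, z j 0 = z j' 0 → j = j' := by
    intro j j' h0
    by_contra hne
    have hback := fullOrbit_back hinj (hzorb j) (hzorb j') h0 ((j + 1) * L)
    set t : ℤ := -((((j + 1) * L : ℕ) : ℤ)) with htdef
    have ht : t = (L : ℤ) * (-((j : ℤ) + 1)) + ((0 : ℕ) : ℤ) := by
      rw [htdef]; push_cast; ring
    have hkneg : -((j : ℤ) + 1) < 0 := by omega
    have hxj : xs j t = q := by
      rw [ht, hneg j _ hkneg 0 (by omega), hc0]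
      simp [hsdef, hptdef]
    have hxj' : xs j' t = p := by
      rw [ht, hneg j' _ hkneg 0 (by omega), hc0]
      have : s j' (-((j : ℤ) + 1)) = false := by
        simp only [hsdef, decide_eq_false_iff_not]
        intro hcontra
        apply hne
        omega
      rw [this]
      simp [hptdef]
    have h1 := hzcl j t
    have h2 := hzcl j' t
    rw [hxj] at h1
    rw [hxj'] at h2
    rw [htdef] at h1 h2
    rw [hback] at h1
    have : d ≤ dist p (z j' (-(((j + 1) * L : ℕ) : ℤ))) + dist (z j' (-(((j + 1) * L : ℕ) : ℤ))) q := by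
      rw [hdd]; exact dist_triangle _ _ _
    rw [dist_comm] at h2
    linarith
  have hG : ((Finset.range (n + 1)).image (fun j => z j 0)).card = n + 1 := by
    rw [Finset.card_image_of_injOn, Finset.card_range]
    intro a _ b _ hab
    exact hdistinct a b hab
  have hGF : (Finset.range (n + 1)).image (fun j => z j 0) ⊆ F := by
    intro y hy
    obtain ⟨j, -, rfl⟩ := Finset.mem_image.1 hy
    exact hmem j
  have := Finset.card_le_card hGF
  omega
end
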